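/- arXiv:2508.11118 — 3 statements merged into one kernel-verified Lean document; each statement's English description precedes it below -/
import Mathlib

section
/- Let z = (z₁,z₂) ∈ ℝ², z ≠ (0,0), and let A(z) be the 2×2 matrix with entries a₁₁ = (z₁²+3z₂²)z₁/((z₁²+z₂²)^{3/2}), a₁₂ = −(3z₁²+z₂²)z₂/((z₁²+z₂²)^{3/2}), a₂₁ = 2z₂³/((z₁²+z₂²)^{3/2}), a₂₂ = 2z₁³/((z₁²+z₂²)^{3/2}). Then ‖A(z)y‖ ≥ ‖y‖ for every y ∈ ℝ². -/
/-- `‖A(z) y‖ ≥ ‖y‖` for the coderivative matrix `A(z)` of `f` at `z ≠ 0`. -/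
theorem coderivative_norm_ge (z₁ z₂ y₁ y₂ : ℝ) (hz : (z₁, z₂) ≠ (0, 0)) :
    Real.sqrt (((z₁ ^ 2 + 3 * z₂ ^ 2) * z₁ / Real.sqrt (z₁ ^ 2 + z₂ ^ 2) ^ 3 * y₁
        + -((3 * z₁ ^ 2 + z₂ ^ 2) * z₂) / Real.sqrt (z₁ ^ 2 + z₂ ^ 2) ^ 3 * y₂) ^ 2
      + (2 * z₂ ^ 3 / Real.sqrt (z₁ ^ 2 + z₂ ^ 2) ^ 3 * y₁
        + 2 * z₁ ^ 3 / Real.sqrt (z₁ ^ 2 + z₂ ^ 2) ^ 3 * y₂) ^ 2)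
    ≥ Real.sqrt (y₁ ^ 2 + y₂ ^ 2) := by
  have h : z₁ ≠ 0 ∨ z₂ ≠ 0 := by
    by_contra h; push_neg at h; exact hz (by simp [h.1, h.2])
  have hzz : z₁ ^ 2 + z₂ ^ 2 > 0 := by
    rcases h with h | h
    · nlinarith [sq_nonneg z₂, pow_pos (abs_pos.mpr h) 2, sq_abs z₁]
    · nlinarith [sq_nonneg z₁, pow_pos (abs_pos.mpr h) 2, sq_abs z₂]
  set r := Real.sqrt (z₁ ^ 2 + z₂ ^ 2) with hrdef
  have hr : 0 < r := Real.sqrt_pos.mpr hzz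
  have hr2 : r ^ 2 = z₁ ^ 2 + z₂ ^ 2 := Real.sq_sqrt hzz.le
  have h6 : (r ^ 3) ^ 2 = (z₁ ^ 2 + z₂ ^ 2) ^ 3 := by rw [← hr2]; ring
  apply Real.sqrt_le_sqrt
  rw [div_mul_eq_mul_div, div_mul_eq_mul_div, div_mul_eq_mul_div, div_mul_eq_mul_div,
    ← add_div, ← add_div, div_pow, div_pow, ← add_div,
    le_div_iff₀ (by positivity), h6]
  nlinarith [mul_nonneg (sq_nonneg (z₂ * y₁ - z₁ * y₂)) (sq_nonneg (z₁ ^ 2 + z₂ ^ 2))]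
end

section
/- Let z = (z₁,z₂) ∈ ℝ², z ≠ (0,0), and let A(z) be the adjoint Jacobian matrix of f at z, with entries a₁₁ = (z₁²+3z₂²)z₁/((z₁²+z₂²)^{3/2}), a₁₂ = −(3z₁²+z₂²)z₂/((z₁²+z₂²)^{3/2}), a₂₁ = 2z₂³/((z₁²+z₂²)^{3/2}), a₂₂ = 2z₁³/((z₁²+z₂²)^{3/2}). Then the infimum of ‖A(z)y‖ over all y ∈ ℝ² with ‖y‖ = 1 equals 1. -/
/-- The infimum of `‖A(z) y‖` over unit vectors `y` equals `1`. -/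
theorem coderivative_inf_norm (z₁ z₂ : ℝ) (hz : (z₁, z₂) ≠ (0, 0)) :
    sInf {r : ℝ | ∃ y₁ y₂ : ℝ, y₁ ^ 2 + y₂ ^ 2 = 1 ∧
      r = Real.sqrt (((z₁ ^ 2 + 3 * z₂ ^ 2) * z₁ / Real.sqrt (z₁ ^ 2 + z₂ ^ 2) ^ 3 * y₁
            + -((3 * z₁ ^ 2 + z₂ ^ 2) * z₂) / Real.sqrt (z₁ ^ 2 + z₂ ^ 2) ^ 3 * y₂) ^ 2
          + (2 * z₂ ^ 3 / Real.sqrt (z₁ ^ 2 + z₂ ^ 2) ^ 3 * y₁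
            + 2 * z₁ ^ 3 / Real.sqrt (z₁ ^ 2 + z₂ ^ 2) ^ 3 * y₂) ^ 2)} = 1 := by
  have hs : 0 < z₁ ^ 2 + z₂ ^ 2 := by
    have h : z₁ ≠ 0 ∨ z₂ ≠ 0 := by
      by_contra hc
      push_neg at hc
      exact hz (by simp [hc.1, hc.2])
    rcases h with h | h <;> positivity
  set t := Real.sqrt (z₁ ^ 2 + z₂ ^ 2) with htdef
  have ht2 : t ^ 2 = z₁ ^ 2 + z₂ ^ 2 := Real.sq_sqrt hs.le
  have ht0 : 0 < t := Real.sqrt_pos.mpr hs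
  have key : ∀ y₁ y₂ : ℝ, y₁ ^ 2 + y₂ ^ 2 = 1 →
      ((z₁ ^ 2 + 3 * z₂ ^ 2) * z₁ / t ^ 3 * y₁
            + -((3 * z₁ ^ 2 + z₂ ^ 2) * z₂) / t ^ 3 * y₂) ^ 2
          + (2 * z₂ ^ 3 / t ^ 3 * y₁ + 2 * z₁ ^ 3 / t ^ 3 * y₂) ^ 2
        = 1 + 3 * (z₂ * y₁ - z₁ * y₂) ^ 2 / t ^ 2 := by
    intro y₁ y₂ hy
    have ht0' : t ≠ 0 := ht0.ne'
    have h6 : t ^ 3 = t * t ^ 2 := by ring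
    rw [h6, ht2]
    field_simp
    linear_combination (-(z₁ ^ 2 + z₂ ^ 2 + 3 * (z₂ * y₁ - z₁ * y₂) ^ 2)
        * (z₁ ^ 2 + z₂ ^ 2)) * ht2 + (z₁ ^ 2 + z₂ ^ 2) ^ 3 * hy
  apply IsLeast.csInf_eq
  constructor
  · refine ⟨z₁ / t, z₂ / t, ?_, ?_⟩
    · field_simp
      linarith [ht2]
    · rw [key (z₁ / t) (z₂ / t) (by field_simp; linarith [ht2])]
      have : z₂ * (z₁ / t) - z₁ * (z₂ / t) = 0 := by ring
      rw [this]
      simp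
  · rintro r ⟨y₁, y₂, hy, rfl⟩
    rw [key y₁ y₂ hy]
    have h1 : (1 : ℝ) ≤ 1 + 3 * (z₂ * y₁ - z₁ * y₂) ^ 2 / t ^ 2 := by
      have : 0 ≤ 3 * (z₂ * y₁ - z₁ * y₂) ^ 2 / t ^ 2 := by positivity
      linarith
    calc (1 : ℝ) = Real.sqrt 1 := Real.sqrt_one.symm
      _ ≤ _ := Real.sqrt_le_sqrt h1
end

section
/- Let g : ℝ⁴ → ℝ⁴ be defined by g(x₁,x₂,x₃,x₄) = ((x₁²−x₂²)/√(x₁²+x₂²), 2x₁x₂/√(x₁²+x₂²), (x₃²−x₄²)/√(x₃²+x₄²), 2x₃x₄/√(x₃²+x₄²)), with the convention that a pair maps to (0,0) when it equals (0,0). If z = (z₁,z₂,z₃,z₄) satisfies (z₁²+z₂²)(z₃²+z₄²) = 0, then g is not Fréchet differentiable at z. -/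
open Classical in
noncomputable def g : EuclideanSpace ℝ (Fin 4) → EuclideanSpace ℝ (Fin 4) := fun x =>
  WithLp.toLp 2 (fun i => ![if x 0 = 0 ∧ x 1 = 0 then 0 else
        (x 0 ^ 2 - x 1 ^ 2) / Real.sqrt (x 0 ^ 2 + x 1 ^ 2),
      if x 0 = 0 ∧ x 1 = 0 then 0 else
        2 * x 0 * x 1 / Real.sqrt (x 0 ^ 2 + x 1 ^ 2),
      if x 2 = 0 ∧ x 3 = 0 then 0 else
        (x 2 ^ 2 - x 3 ^ 2) / Real.sqrt (x 2 ^ 2 + x 3 ^ 2),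
      if x 2 = 0 ∧ x 3 = 0 then 0 else
        2 * x 2 * x 3 / Real.sqrt (x 2 ^ 2 + x 3 ^ 2)] i)

lemma sq_div_abs (t : ℝ) (ht : t ≠ 0) : (t ^ 2 - 0 ^ 2) / Real.sqrt (t ^ 2 + 0 ^ 2) = |t| := by
  have h : Real.sqrt (t ^ 2 + 0 ^ 2) = |t| := by
    rw [show t ^ 2 + 0 ^ 2 = t ^ 2 by ring, Real.sqrt_sq_eq_abs]
  rw [h, show t ^ 2 - 0 ^ 2 = |t| ^ 2 by rw [sq_abs]; ring, sq,
    mul_div_assoc, div_self (abs_ne_zero.2 ht), mul_one]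

lemma g0 (z : EuclideanSpace ℝ (Fin 4)) (h0 : z 0 = 0) (h1 : z 1 = 0) (t : ℝ) :
    g (z + t • EuclideanSpace.single (0 : Fin 4) (1 : ℝ)) 0 = |t| := by
  have e0 : (z + t • EuclideanSpace.single (0 : Fin 4) (1 : ℝ)) 0 = t := by
    simp [EuclideanSpace.single_apply, h0]
  have e1 : (z + t • EuclideanSpace.single (0 : Fin 4) (1 : ℝ)) 1 = 0 := by
    simp [EuclideanSpace.single_apply, h1]
  show (@ite _ (_ ∧ _) _ _ _) = _
  rw [e0, e1]
  by_cases ht : t = 0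
  · simp [ht]
  · rw [if_neg (by tauto)]
    exact sq_div_abs t ht

lemma g2 (z : EuclideanSpace ℝ (Fin 4)) (h2 : z 2 = 0) (h3 : z 3 = 0) (t : ℝ) :
    g (z + t • EuclideanSpace.single (2 : Fin 4) (1 : ℝ)) 2 = |t| := by
  have e2 : (z + t • EuclideanSpace.single (2 : Fin 4) (1 : ℝ)) 2 = t := by
    simp [EuclideanSpace.single_apply, h2]
  have e3 : (z + t • EuclideanSpace.single (2 : Fin 4) (1 : ℝ)) 3 = 0 := by
    simp [EuclideanSpace.single_apply, h3]
  show (@ite _ (_ ∧ _) _ _ _) = _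
  rw [e2, e3]
  by_cases ht : t = 0
  · simp [ht]
  · rw [if_neg (by tauto)]
    exact sq_div_abs t ht

lemma key (z : EuclideanSpace ℝ (Fin 4)) (i : Fin 4)
    (h : DifferentiableAt ℝ g z)
    (habs : ∀ t : ℝ, g (z + t • EuclideanSpace.single i (1 : ℝ)) i = |t|) : False := by
  have hcurve : DifferentiableAt ℝ
      (fun t : ℝ => z + t • EuclideanSpace.single i (1 : ℝ)) 0 :=
    (differentiableAt_id.smul_const _).const_add _
  have hg : DifferentiableAt ℝ (fun t : ℝ => g (z + t • EuclideanSpace.single i (1 : ℝ))) 0 := by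
    have hz' : DifferentiableAt ℝ g ((fun t : ℝ => z + t • EuclideanSpace.single i (1 : ℝ)) 0) := by
      simpa using h
    have hc := hz'.comp 0 hcurve
    exact hc
  have hproj : DifferentiableAt ℝ
      (fun t : ℝ => g (z + t • EuclideanSpace.single i (1 : ℝ)) i) 0 := by
    exact (EuclideanSpace.proj i).differentiableAt.comp 0 hg
  have : DifferentiableAt ℝ (abs : ℝ → ℝ) 0 := by
    have heq : (fun t : ℝ => g (z + t • EuclideanSpace.single i (1 : ℝ)) i) = abs := by
      funext t; exact habs t
    rwa [heq] at hproj
  exact not_differentiableAt_abs_zero this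

theorem g_not_differentiable (z : EuclideanSpace ℝ (Fin 4))
    (hz : (z 0 ^ 2 + z 1 ^ 2) * (z 2 ^ 2 + z 3 ^ 2) = 0) :
    ¬ DifferentiableAt ℝ g z := by
  intro h
  rcases mul_eq_zero.1 hz with h12 | h34
  · have h0 : z 0 = 0 := by nlinarith [sq_nonneg (z 0), sq_nonneg (z 1)]
    have h1 : z 1 = 0 := by nlinarith [sq_nonneg (z 0), sq_nonneg (z 1)]
    exact key z 0 h (g0 z h0 h1)
  · have h2 : z 2 = 0 := by nlinarith [sq_nonneg (z 2), sq_nonneg (z 3)]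
    have h3 : z 3 = 0 := by nlinarith [sq_nonneg (z 2), sq_nonneg (z 3)]
    exact key z 2 h (g2 z h2 h3)
end
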